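/- Let k ≥ 3 be an integer. There exists a unique strictly increasing sequence (A_i)_{i=1}^{∞} of positive integers with A_1 = 1 such that G = ⋃_{i=1}^{∞} (1/A_{2i}, 1/A_{2i−1}] is a k-good set and Bad(G) = ⋃_{i=1}^{∞} (1/A_{2i+1}, 1/A_{2i}]. -/

import Mathlib

/-- A set `G` of reals is `k`-good if it contains no geometric progression of
length `k` with integer ratio. -/
def kGood (k : ℕ) (G : Set ℝ) : Prop :=
  ¬ ∃ (a : ℝ) (r : ℕ), 0 < a ∧ 2 ≤ r ∧ ∀ j < k, a * (r : ℝ) ^ j ∈ G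

/-- `x` is `k`-bad with respect to `G` if there is an integer `r ≥ 2` with
`x * r ^ j ∈ G` for all `j ∈ {1,...,k-1}`. -/
def kBadWrt (k : ℕ) (G : Set ℝ) (x : ℝ) : Prop :=
  ∃ r : ℕ, 2 ≤ r ∧ ∀ j : ℕ, 1 ≤ j → j ≤ k - 1 → x * (r : ℝ) ^ j ∈ G

/-- `Bad k G` is the set of `x ∈ (0,1] \ G` that are `k`-bad with respect to `G`. -/
def Bad (k : ℕ) (G : Set ℝ) : Set ℝ :=
  {x | x ∈ Set.Ioc (0 : ℝ) 1 \ G ∧ kBadWrt k G x}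

/-- Fuel-based version of the membership predicate. -/
def Qf (k : ℕ) : ℕ → ℕ → Prop
  | 0, _ => True
  | f+1, n => ¬ ∃ r, 2 ≤ r ∧ ∀ j, 1 ≤ j → j ≤ k - 1 →
      r ^ j ≤ n ∧ Qf k f (n / r ^ j)

/-- `Q k n` says the interval `(1/(n+1), 1/n]` belongs to the canonical good set. -/
def Q (k n : ℕ) : Prop := Qf k n n

lemma Qf_zero (k : ℕ) (hk : 3 ≤ k) (f : ℕ) : Qf k f 0 := by
  cases f with
  | zero => trivial
  | succ f =>
    rintro ⟨r, hr, h⟩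
    have h1 := h 1 le_rfl (by omega)
    simp at h1
    omega

lemma Qf_stable (k : ℕ) (hk : 3 ≤ k) :
    ∀ n f f', n ≤ f → n ≤ f' → (Qf k f n ↔ Qf k f' n) := by
  intro n
  induction n using Nat.strong_induction_on with
  | _ n ih =>
    intro f f' hf hf'
    rcases Nat.eq_zero_or_pos n with rfl | hn
    · constructor <;> intro _ <;> exact Qf_zero k hk _
    · obtain ⟨f, rfl⟩ : ∃ g, f = g + 1 := ⟨f - 1, by omega⟩
      obtain ⟨f', rfl⟩ : ∃ g, f' = g + 1 := ⟨f' - 1, by omega⟩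
      show ¬ _ ↔ ¬ _
      apply not_congr
      apply exists_congr; intro r
      apply and_congr_right; intro hr
      apply forall_congr'; intro j
      apply imp_congr_right; intro hj
      apply imp_congr_right; intro hjk
      apply and_congr_right; intro hle
      have h2 : 2 ≤ r ^ j := by
        calc 2 = 2^1 := (pow_one 2).symm
        _ ≤ r ^ j := Nat.pow_le_pow_left hr 1 |>.trans (Nat.pow_le_pow_right (by omega) hj)
      have hlt : n / r ^ j < n := Nat.div_lt_self hn h2
      exact ih _ hlt f f' (by omega) (by omega)

lemma Q_iff (k : ℕ) (hk : 3 ≤ k) (n : ℕ) :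
    Q k n ↔ ¬ ∃ r, 2 ≤ r ∧ ∀ j, 1 ≤ j → j ≤ k - 1 →
      r ^ j ≤ n ∧ Q k (n / r ^ j) := by
  rcases Nat.eq_zero_or_pos n with rfl | hn
  · constructor
    · rintro _ ⟨r, hr, h⟩
      have h1 := h 1 le_rfl (by omega)
      simp at h1; omega
    · intro _; exact Qf_zero k hk 0
  · obtain ⟨m, rfl⟩ : ∃ g, n = g + 1 := ⟨n - 1, by omega⟩
    show ¬ _ ↔ ¬ _
    apply not_congr
    apply exists_congr; intro r
    apply and_congr_right; intro hr
    apply forall_congr'; intro j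
    apply imp_congr_right; intro hj
    apply imp_congr_right; intro hjk
    apply and_congr_right; intro hle
    have h2 : 2 ≤ r ^ j := by
      calc 2 = 2^1 := (pow_one 2).symm
      _ ≤ r ^ j := Nat.pow_le_pow_left hr 1 |>.trans (Nat.pow_le_pow_right (by omega) hj)
    have hlt : (m+1) / r ^ j < m + 1 := Nat.div_lt_self hn h2
    exact Qf_stable k hk _ m _ (by omega) le_rfl

lemma Q_one (k : ℕ) (hk : 3 ≤ k) : Q k 1 := by
  rw [Q_iff k hk]
  rintro ⟨r, hr, h⟩
  have h1 := (h 1 le_rfl (by omega)).1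
  simp at h1; omega

/-- There are arbitrarily large `n` with `¬ Q k n`. -/
lemma exists_not_Q (k : ℕ) (hk : 3 ≤ k) (m : ℕ) (hm : 1 ≤ m) :
    ∃ n, m ≤ n ∧ ¬ Q k n := by
  by_contra hcon
  push_neg at hcon
  set n₀ := 2 ^ (k-1) * m with hn₀
  have hn₀m : m ≤ n₀ := Nat.le_mul_of_pos_left m (Nat.pow_pos (by norm_num))
  have hQ : Q k n₀ := hcon n₀ hn₀m
  rw [Q_iff k hk] at hQ
  apply hQ
  refine ⟨2, le_rfl, fun j hj hjk => ?_⟩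
  have hd : n₀ / 2 ^ j = 2 ^ (k - 1 - j) * m := by
    have : 2 ^ (k-1) = 2 ^ j * 2 ^ (k - 1 - j) := by
      rw [← pow_add]; congr 1; omega
    rw [hn₀, this, Nat.mul_assoc, Nat.mul_div_cancel_left _ (Nat.pow_pos (by norm_num))]
  constructor
  · calc 2 ^ j ≤ 2 ^ (k-1) := Nat.pow_le_pow_right (by norm_num) hjk
    _ ≤ n₀ := Nat.le_mul_of_pos_right _ hm
  · rw [hd]
    exact hcon _ (Nat.le_mul_of_pos_left m (Nat.pow_pos (by norm_num)))

/-- There are arbitrarily large `n` with `Q k n`. -/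
lemma exists_Q (k : ℕ) (hk : 3 ≤ k) (m : ℕ) :
    ∃ n, m ≤ n ∧ Q k n := by
  by_contra hcon
  push_neg at hcon
  set N := m + 1 with hN
  have hcon' : ∀ n, N ≤ n → ¬ Q k n := fun n hn => hcon n (by omega)
  have hQ : ¬ Q k (N * N) := hcon' _ (Nat.le_mul_of_pos_left N (by omega))
  rw [Q_iff k hk, not_not] at hQ
  obtain ⟨r, hr, h⟩ := hQ
  have h1 := h 1 le_rfl (by omega)
  have hk1 := h (k-1) (by omega) le_rfl
  rw [pow_one] at h1
  -- Q (N*N/r) holds, so N*N/r < N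
  have hlt : N * N / r < N := by
    by_contra hge
    exact hcon' _ (by omega) h1.2
  have hNNr : N * N < N * r := (Nat.div_lt_iff_lt_mul (by omega)).1 hlt
  -- r^(k-1) ≤ N*N and r^(k-1) = r^(k-2)*r
  have hpow : r ^ (k-2) * r ≤ N * N := by
    have : r ^ (k-2) * r = r ^ (k-1) := by
      rw [← pow_succ]; congr 1; omega
    rw [this]; exact hk1.1
  have hrk2 : r ^ (k-2) < N := by
    have := hpow.trans_lt hNNr
    exact Nat.lt_of_mul_lt_mul_right this
  have hrN : r < N := by
    calc r = r ^ 1 := (pow_one r).symm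
    _ ≤ r ^ (k-2) := Nat.pow_le_pow_right (by omega) (by omega)
    _ < N := hrk2
  have : N * N < N * N := hNNr.trans_le (Nat.mul_le_mul_left N (by omega))
  omega

open Classical in
/-- The canonical sequence of switch points of `Q k`. -/
noncomputable def Aseq (k : ℕ) : ℕ → ℕ
  | 0 => 1
  | i+1 => sInf {n | Aseq k i < n ∧ (Q k n ↔ Even (i+1))}

lemma Aseq_set_nonempty (k : ℕ) (hk : 3 ≤ k) (i : ℕ) (h1 : 1 ≤ Aseq k i) :
    {n | Aseq k i < n ∧ (Q k n ↔ Even (i+1))}.Nonempty := by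
  rcases Nat.even_or_odd (i+1) with he | ho
  · obtain ⟨n, hn, hQ⟩ := exists_Q k hk (Aseq k i + 1)
    exact ⟨n, by omega, by simp [hQ, he]⟩
  · obtain ⟨n, hn, hQ⟩ := exists_not_Q k hk (Aseq k i + 1) (by omega)
    exact ⟨n, by omega, by simp [hQ, Nat.not_even_iff_odd.2 ho]⟩

lemma Aseq_one_le (k : ℕ) (hk : 3 ≤ k) : ∀ i, 1 ≤ Aseq k i := by
  intro i
  induction i with
  | zero => simp [Aseq]
  | succ i ih =>
    have hne := Aseq_set_nonempty k hk i ih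
    have hmem := Nat.sInf_mem hne
    have : Aseq k i < Aseq k (i+1) := by
      show Aseq k i < sInf _
      exact hmem.1
    omega

lemma Aseq_lt_succ (k : ℕ) (hk : 3 ≤ k) (i : ℕ) : Aseq k i < Aseq k (i+1) :=
  (Nat.sInf_mem (Aseq_set_nonempty k hk i (Aseq_one_le k hk i))).1

lemma Aseq_strictMono (k : ℕ) (hk : 3 ≤ k) : StrictMono (Aseq k) :=
  strictMono_nat_of_lt_succ (Aseq_lt_succ k hk)

lemma Q_Aseq (k : ℕ) (hk : 3 ≤ k) : ∀ i, Q k (Aseq k i) ↔ Even i := by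
  intro i
  cases i with
  | zero => simp [Aseq, Q_one k hk]
  | succ i =>
    exact (Nat.sInf_mem (Aseq_set_nonempty k hk i (Aseq_one_le k hk i))).2

/-- On `[Aseq i, Aseq (i+1))`, the predicate `Q` equals `Even i`. -/
lemma Q_iff_even (k : ℕ) (hk : 3 ≤ k) (i n : ℕ) (h1 : Aseq k i ≤ n)
    (h2 : n < Aseq k (i+1)) : Q k n ↔ Even i := by
  rcases eq_or_lt_of_le h1 with rfl | hlt
  · exact Q_Aseq k hk i
  · by_contra hne
    have : Q k n ↔ Even (i+1) := by
      rw [Nat.even_add_one]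
      tauto
    have hmem : n ∈ {n | Aseq k i < n ∧ (Q k n ↔ Even (i+1))} := ⟨hlt, this⟩
    have := Nat.sInf_le hmem
    show False
    have : Aseq k (i+1) ≤ n := this
    omega

/-- Every `n ≥ 1` lies in some interval `[Aseq i, Aseq (i+1))`. -/
lemma Aseq_covers (k : ℕ) (hk : 3 ≤ k) (n : ℕ) (hn : 1 ≤ n) :
    ∃ i, Aseq k i ≤ n ∧ n < Aseq k (i+1) := by
  have hgrow : ∀ i, i + 1 ≤ Aseq k i := by
    intro i
    induction i with
    | zero => simp [Aseq]
    | succ i ih => have := Aseq_lt_succ k hk i; omega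
  have hex : ∃ j, n < Aseq k j := ⟨n, by have := hgrow n; omega⟩
  classical
  have hj : n < Aseq k (Nat.find hex) := Nat.find_spec hex
  have hj0 : Nat.find hex ≠ 0 := by
    intro h
    rw [h] at hj
    have : Aseq k 0 = 1 := rfl
    omega
  obtain ⟨i, hi⟩ : ∃ i, Nat.find hex = i + 1 := ⟨Nat.find hex - 1, by omega⟩
  rw [hi] at hj
  refine ⟨i, ?_, hj⟩
  have := Nat.find_min hex (m := i) (by omega)
  omega

/-- Membership in a reciprocal interval in terms of the natural floor of `1/x`. -/
lemma mem_Ioc_iff_floor (x : ℝ) (hx : 0 < x) (a b : ℕ) (ha : 1 ≤ a) (hb : 1 ≤ b) :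
    x ∈ Set.Ioc (1/(b:ℝ)) (1/(a:ℝ)) ↔ a ≤ ⌊1/x⌋₊ ∧ ⌊1/x⌋₊ < b := by
  have hb' : (0:ℝ) < b := by positivity
  have ha' : (0:ℝ) < a := by positivity
  have h1 : x ≤ 1/(a:ℝ) ↔ (a:ℝ) ≤ 1/x := by
    rw [le_div_iff₀ ha', le_div_iff₀ hx]
    constructor <;> intro h <;> nlinarith
  have h2 : 1/(b:ℝ) < x ↔ 1/x < (b:ℝ) := by
    rw [div_lt_iff₀ hb', div_lt_iff₀ hx]
    constructor <;> intro h <;> nlinarith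
  have hinv : (0:ℝ) ≤ 1/x := by positivity
  constructor
  · rintro ⟨hl, hr⟩
    exact ⟨Nat.le_floor (h1.1 hr), (Nat.floor_lt hinv).2 (h2.1 hl)⟩
  · rintro ⟨hl, hr⟩
    exact ⟨h2.2 ((Nat.floor_lt hinv).1 hr), h1.2 ((Nat.le_floor_iff hinv).1 hl)⟩

/-- A union of reciprocal intervals sits inside `(0,1]`. -/
lemma union_subset_Ioc (f g : ℕ → ℕ) (hf : ∀ i, 1 ≤ f i) :
    (⋃ i : ℕ, Set.Ioc (1 / (g i : ℝ)) (1 / (f i : ℝ))) ⊆ Set.Ioc (0:ℝ) 1 := by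
  intro x hx
  simp only [Set.mem_iUnion] at hx
  obtain ⟨i, hl, hr⟩ := hx
  have hf' : (1:ℝ) ≤ f i := by exact_mod_cast hf i
  have hg' : (0:ℝ) ≤ 1 / (g i : ℝ) := by positivity
  constructor
  · linarith
  · calc x ≤ 1 / (f i : ℝ) := hr
      _ ≤ 1 := by rw [div_le_one (by linarith)]; linarith

/-- Membership in a union of reciprocal intervals in terms of `⌊1/x⌋₊`. -/
lemma mem_union_iff_floor (f g : ℕ → ℕ) (hf : ∀ i, 1 ≤ f i) (hg : ∀ i, 1 ≤ g i)
    (x : ℝ) (hx : 0 < x) :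
    x ∈ (⋃ i : ℕ, Set.Ioc (1 / (g i : ℝ)) (1 / (f i : ℝ))) ↔
      ∃ i, f i ≤ ⌊1/x⌋₊ ∧ ⌊1/x⌋₊ < g i := by
  simp only [Set.mem_iUnion]
  exact exists_congr fun i => mem_Ioc_iff_floor x hx (f i) (g i) (hf i) (hg i)

/-- Floor of `1/(x * r^j)`. -/
lemma floor_inv_mul (x : ℝ) (hx : 0 < x) (m : ℕ) :
    ⌊1/(x * (m:ℝ))⌋₊ = ⌊1/x⌋₊ / m := by
  have : 1/(x * (m:ℝ)) = (1/x) / (m:ℕ) := by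
    push_cast; field_simp
  rw [this, Nat.floor_div_natCast]

/-- The set determined by a sequence `C`. -/
def GSet (C : ℕ → ℕ) : Set ℝ :=
  ⋃ i : ℕ, Set.Ioc (1 / (C (2 * i + 1) : ℝ)) (1 / (C (2 * i) : ℝ))

/-- The discrete membership predicate determined by `C`. -/
def QC (C : ℕ → ℕ) (n : ℕ) : Prop :=
  ∃ i, C (2 * i) ≤ n ∧ n < C (2 * i + 1)

lemma GSet_subset (C : ℕ → ℕ) (hC : ∀ i, 1 ≤ C i) : GSet C ⊆ Set.Ioc (0:ℝ) 1 :=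
  union_subset_Ioc _ _ (fun i => hC _)

lemma mem_GSet_iff (C : ℕ → ℕ) (hC : ∀ i, 1 ≤ C i) (x : ℝ) (hx : 0 < x) :
    x ∈ GSet C ↔ QC C ⌊1/x⌋₊ :=
  mem_union_iff_floor (fun i => C (2*i)) (fun i => C (2*i+1))
    (fun i => hC _) (fun i => hC _) x hx

lemma Q_iff_QC_Aseq (k : ℕ) (hk : 3 ≤ k) (n : ℕ) (hn : 1 ≤ n) :
    Q k n ↔ QC (Aseq k) n := by
  constructor
  · intro hQ
    obtain ⟨i, h1, h2⟩ := Aseq_covers k hk n hn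
    have he := (Q_iff_even k hk i n h1 h2).1 hQ
    obtain ⟨i', rfl⟩ : ∃ i', i = 2 * i' := by
      rcases he with ⟨r, hr⟩; exact ⟨r, by omega⟩
    exact ⟨i', h1, h2⟩
  · rintro ⟨i, h1, h2⟩
    exact (Q_iff_even k hk (2*i) n h1 h2).2 ⟨i, by omega⟩

lemma not_Q_iff_odd (k : ℕ) (hk : 3 ≤ k) (n : ℕ) (hn : 1 ≤ n) :
    ¬ Q k n ↔ ∃ i, Aseq k (2*i+1) ≤ n ∧ n < Aseq k (2*i+2) := by
  constructor
  · intro hQ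
    obtain ⟨i, h1, h2⟩ := Aseq_covers k hk n hn
    have he : ¬ Even i := fun he => hQ ((Q_iff_even k hk i n h1 h2).2 he)
    obtain ⟨i', rfl⟩ : ∃ i', i = 2 * i' + 1 := by
      rcases Nat.odd_iff.1 (Nat.not_even_iff_odd.1 he) with hr
      exact ⟨i / 2, by omega⟩
    exact ⟨i', h1, h2⟩
  · rintro ⟨i, h1, h2⟩ hQ
    have : Even (2*i+1) := (Q_iff_even k hk (2*i+1) n h1 (by
      have : 2*i+1+1 = 2*i+2 := rfl
      rw [this]; exact h2)).1 hQ
    simp [Nat.even_add_one] at this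

lemma one_le_floor_inv (x : ℝ) (hx : 0 < x) (hx1 : x ≤ 1) : 1 ≤ ⌊1/x⌋₊ := by
  have : (1:ℝ) ≤ 1/x := by rw [le_div_iff₀ hx]; linarith
  exact_mod_cast Nat.le_floor (by exact_mod_cast this)

/-- If `x ∈ (0,1]`, `r^j ≤ ⌊1/x⌋₊` and `QC C (⌊1/x⌋₊ / r^j)`, then `x r^j ∈ GSet C`,
and conversely. -/
lemma mul_pow_mem_GSet_iff (C : ℕ → ℕ) (hC : ∀ i, 1 ≤ C i) (x : ℝ) (hx : 0 < x)
    (hx1 : x ≤ 1) (r j : ℕ) (hr : 1 ≤ r) :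
    x * (r:ℝ)^j ∈ GSet C ↔ r^j ≤ ⌊1/x⌋₊ ∧ QC C (⌊1/x⌋₊ / r^j) := by
  have hrj : 1 ≤ r ^ j := Nat.one_le_pow _ _ (by omega)
  have hrj' : (0:ℝ) < (r:ℝ)^j := by positivity
  have hxr : 0 < x * (r:ℝ)^j := by positivity
  have hfl : ⌊1/(x * (r:ℝ)^j)⌋₊ = ⌊1/x⌋₊ / r^j := by
    have hcast : (r:ℝ)^j = ((r^j : ℕ) : ℝ) := by push_cast; ring
    rw [hcast, floor_inv_mul x hx (r^j)]
  constructor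
  · intro hmem
    have hsub := GSet_subset C hC hmem
    have hle1 : x * (r:ℝ)^j ≤ 1 := hsub.2
    have hrle : ((r^j : ℕ):ℝ) ≤ 1/x := by
      rw [le_div_iff₀ hx]; push_cast; nlinarith
    have h1 : r^j ≤ ⌊1/x⌋₊ := Nat.le_floor hrle
    have h2 := (mem_GSet_iff C hC _ hxr).1 hmem
    rw [hfl] at h2
    exact ⟨h1, h2⟩
  · rintro ⟨h1, h2⟩
    rw [mem_GSet_iff C hC _ hxr, hfl]
    exact h2

theorem kGood_Aseq (k : ℕ) (hk : 3 ≤ k) : kGood k (GSet (Aseq k)) := by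
  rintro ⟨a, r, ha, hr, hmem⟩
  have hC := Aseq_one_le k hk
  have h0 : a ∈ GSet (Aseq k) := by
    have := hmem 0 (by omega)
    simpa using this
  have ha1 : a ≤ 1 := (GSet_subset _ hC h0).2
  set n := ⌊1/a⌋₊ with hn
  have hn1 : 1 ≤ n := one_le_floor_inv a ha ha1
  have hQn : Q k n := (Q_iff_QC_Aseq k hk n hn1).2 ((mem_GSet_iff _ hC a ha).1 h0)
  apply (Q_iff k hk n).1 hQn
  refine ⟨r, hr, fun j hj hjk => ?_⟩
  have hmemj := hmem j (by omega)
  have hiff := (mul_pow_mem_GSet_iff (Aseq k) hC a ha ha1 r j (by omega)).1 hmemj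
  refine ⟨hiff.1, ?_⟩
  have hd1 : 1 ≤ n / r^j := (Nat.one_le_div_iff (Nat.one_le_pow _ _ (by omega))).2 hiff.1
  exact (Q_iff_QC_Aseq k hk _ hd1).2 hiff.2

theorem Bad_Aseq (k : ℕ) (hk : 3 ≤ k) :
    Bad k (GSet (Aseq k)) =
      ⋃ i : ℕ, Set.Ioc (1 / (Aseq k (2 * i + 2) : ℝ)) (1 / (Aseq k (2 * i + 1) : ℝ)) := by
  have hC := Aseq_one_le k hk
  ext x
  constructor
  · rintro ⟨⟨hx01, hxG⟩, _⟩
    have hx : 0 < x := hx01.1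
    set n := ⌊1/x⌋₊ with hn
    have hn1 : 1 ≤ n := one_le_floor_inv x hx hx01.2
    have hnQ : ¬ Q k n := fun hQ =>
      hxG ((mem_GSet_iff _ hC x hx).2 ((Q_iff_QC_Aseq k hk n hn1).1 hQ))
    obtain ⟨i, h1, h2⟩ := (not_Q_iff_odd k hk n hn1).1 hnQ
    simp only [Set.mem_iUnion]
    exact ⟨i, (mem_Ioc_iff_floor x hx _ _ (hC _) (hC _)).2 ⟨h1, h2⟩⟩
  · intro hx'
    simp only [Set.mem_iUnion] at hx'
    obtain ⟨i, hxi⟩ := hx'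
    have hx : 0 < x := by
      have : (0:ℝ) ≤ 1 / (Aseq k (2*i+2) : ℝ) := by positivity
      exact lt_of_le_of_lt this hxi.1
    have hx1 : x ≤ 1 := by
      have h1 : (1:ℝ) ≤ (Aseq k (2*i+1) : ℝ) := by exact_mod_cast hC _
      calc x ≤ 1 / (Aseq k (2*i+1) : ℝ) := hxi.2
        _ ≤ 1 := by rw [div_le_one (by linarith)]; exact h1
    set n := ⌊1/x⌋₊ with hn
    have hrange := (mem_Ioc_iff_floor x hx _ _ (hC _) (hC _)).1 hxi
    have hn1 : 1 ≤ n := one_le_floor_inv x hx hx1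
    have hnQ : ¬ Q k n := (not_Q_iff_odd k hk n hn1).2 ⟨i, hrange.1, hrange.2⟩
    have hxG : x ∉ GSet (Aseq k) := fun hmem =>
      hnQ ((Q_iff_QC_Aseq k hk n hn1).2 ((mem_GSet_iff _ hC x hx).1 hmem))
    refine ⟨⟨⟨hx, hx1⟩, hxG⟩, ?_⟩
    rw [Q_iff k hk, not_not] at hnQ
    obtain ⟨r, hr, hs⟩ := hnQ
    refine ⟨r, hr, fun j hj hjk => ?_⟩
    obtain ⟨hle, hQd⟩ := hs j hj hjk
    apply (mul_pow_mem_GSet_iff (Aseq k) hC x hx hx1 r j (by omega)).2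
    have hd1 : 1 ≤ n / r^j := (Nat.one_le_div_iff (Nat.one_le_pow _ _ (by omega))).2 hle
    exact ⟨hle, (Q_iff_QC_Aseq k hk _ hd1).1 hQd⟩

section Uniqueness

variable (k : ℕ) (C : ℕ → ℕ)

lemma covers_of_strictMono (hmono : StrictMono C) (hC0 : C 0 = 1) (n : ℕ) (hn : 1 ≤ n) :
    ∃ i, C i ≤ n ∧ n < C (i+1) := by
  have hgrow : ∀ i, i + 1 ≤ C i := by
    intro i
    induction i with
    | zero => omega
    | succ i ih => have := hmono (show i < i+1 by omega); omega
  have hex : ∃ j, n < C j := ⟨n, by have := hgrow n; omega⟩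
  classical
  have hj : n < C (Nat.find hex) := Nat.find_spec hex
  have hj0 : Nat.find hex ≠ 0 := by
    intro h
    rw [h, hC0] at hj; omega
  obtain ⟨i, hi⟩ : ∃ i, Nat.find hex = i + 1 := ⟨Nat.find hex - 1, by omega⟩
  rw [hi] at hj
  refine ⟨i, ?_, hj⟩
  have := Nat.find_min hex (m := i) (by omega)
  omega

lemma interval_unique (hmono : StrictMono C) {j j' n : ℕ}
    (h1 : C j ≤ n) (h2 : n < C (j+1)) (h1' : C j' ≤ n) (h2' : n < C (j'+1)) : j = j' := by
  by_contra hne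
  rcases Nat.lt_or_ge j j' with h | h
  · have : C (j+1) ≤ C j' := hmono.le_iff_le.2 (by omega)
    omega
  · have : C (j'+1) ≤ C j := hmono.le_iff_le.2 (by omega)
    omega

lemma QC_iff_even (hmono : StrictMono C) {j n : ℕ} (h1 : C j ≤ n) (h2 : n < C (j+1)) :
    QC C n ↔ Even j := by
  constructor
  · rintro ⟨i, hi1, hi2⟩
    have := interval_unique C hmono h1 h2 hi1 hi2
    exact ⟨i, by omega⟩
  · rintro ⟨r, hr⟩
    exact ⟨r, by rw [(by omega : 2*r = j)]; exact h1,
      by rw [(by omega : 2*r = j)]; exact h2⟩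

lemma not_QC_iff_odd (hmono : StrictMono C) (hC0 : C 0 = 1) (n : ℕ) (hn : 1 ≤ n) :
    ¬ QC C n ↔ ∃ i, C (2*i+1) ≤ n ∧ n < C (2*i+2) := by
  obtain ⟨j, h1, h2⟩ := covers_of_strictMono C hmono hC0 n hn
  rw [QC_iff_even C hmono h1 h2]
  constructor
  · intro ho
    obtain ⟨i, hi⟩ : ∃ i, j = 2*i+1 := by
      rcases Nat.even_or_odd j with he | ⟨i, hi⟩
      · exact absurd he ho
      · exact ⟨i, by omega⟩
    refine ⟨i, by rw [← hi]; exact h1, by rw [(by omega : 2*i+2 = j+1)]; exact h2⟩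
  · rintro ⟨i, hi1, hi2⟩ he
    have := interval_unique C hmono h1 h2 hi1 (by rw [(by omega : 2*i+1+1 = 2*i+2)]; exact hi2)
    rw [this] at he
    simp [Nat.even_add_one, parity_simps] at he

variable (hk : 3 ≤ k) (hpos : ∀ i, 0 < C i) (hmono : StrictMono C) (hC0 : C 0 = 1)
  (hgood : kGood k (GSet C))
  (hbad : Bad k (GSet C) = ⋃ i : ℕ, Set.Ioc (1 / (C (2 * i + 2) : ℝ)) (1 / (C (2 * i + 1) : ℝ)))

include hk hpos hmono hC0 hgood hbad in
/-- The predicate `QC C` satisfies the same recursion as `Q k`. -/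
lemma QC_recursion (n : ℕ) (hn : 1 ≤ n) :
    QC C n ↔ ¬ ∃ r, 2 ≤ r ∧ ∀ j, 1 ≤ j → j ≤ k - 1 →
      r ^ j ≤ n ∧ QC C (n / r ^ j) := by
  have hC1 : ∀ i, 1 ≤ C i := fun i => hpos i
  set x : ℝ := 1/(n:ℝ) with hxdef
  have hn' : (1:ℝ) ≤ (n:ℝ) := by exact_mod_cast hn
  have hx : 0 < x := by positivity
  have hx1 : x ≤ 1 := by rw [hxdef, div_le_one (by linarith)]; linarith
  have hfl : ⌊1/x⌋₊ = n := by
    rw [hxdef, one_div_one_div, Nat.floor_natCast]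
  constructor
  · intro hQC
    rintro ⟨r, hr, h⟩
    apply hgood
    refine ⟨x, r, hx, hr, fun j hj => ?_⟩
    rcases Nat.eq_zero_or_pos j with rfl | hj1
    · simpa using (mem_GSet_iff C hC1 x hx).2 (by rw [hfl]; exact hQC)
    · have hjk : j ≤ k - 1 := by omega
      obtain ⟨hle, hQd⟩ := h j hj1 hjk
      apply (mul_pow_mem_GSet_iff C hC1 x hx hx1 r j (by omega)).2
      rw [hfl]
      exact ⟨hle, hQd⟩
  · intro hnex
    by_contra hnQC
    apply hnex
    have hxG : x ∉ GSet C := fun hmem => hnQC (by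
      have := (mem_GSet_iff C hC1 x hx).1 hmem
      rwa [hfl] at this)
    have hxBad : x ∈ Bad k (GSet C) := by
      rw [hbad]
      obtain ⟨i, hi1, hi2⟩ := (not_QC_iff_odd C hmono hC0 n hn).1 hnQC
      simp only [Set.mem_iUnion]
      exact ⟨i, (mem_Ioc_iff_floor x hx _ _ (hC1 _) (hC1 _)).2 (by rw [hfl]; exact ⟨hi1, hi2⟩)⟩
    obtain ⟨r, hr, h⟩ := hxBad.2
    refine ⟨r, hr, fun j hj hjk => ?_⟩
    have := (mul_pow_mem_GSet_iff C hC1 x hx hx1 r j (by omega)).1 (h j hj hjk)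
    rwa [hfl] at this

include hk hpos hmono hC0 hgood hbad in
lemma QC_eq_Q : ∀ n, 1 ≤ n → (QC C n ↔ Q k n) := by
  intro n
  induction n using Nat.strong_induction_on with
  | _ n ih =>
    intro hn
    rw [QC_recursion k C hk hpos hmono hC0 hgood hbad n hn, Q_iff k hk n]
    apply not_congr
    apply exists_congr; intro r
    apply and_congr_right; intro hr
    apply forall_congr'; intro j
    apply imp_congr_right; intro hj
    apply imp_congr_right; intro hjk
    apply and_congr_right; intro hle
    have h2 : 2 ≤ r ^ j := by
      calc 2 = 2^1 := (pow_one 2).symm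
      _ ≤ r ^ j := Nat.pow_le_pow_left hr 1 |>.trans (Nat.pow_le_pow_right (by omega) hj)
    have hlt : n / r ^ j < n := Nat.div_lt_self (by omega) h2
    have hd1 : 1 ≤ n / r ^ j := (Nat.one_le_div_iff (by omega)).2 hle
    exact ih _ hlt hd1

include hk hpos hmono hC0 hgood hbad in
lemma C_eq_Aseq : C = Aseq k := by
  have hQev : ∀ i n, C i ≤ n → n < C (i+1) → (Q k n ↔ Even i) := by
    intro i n h1 h2
    have hn1 : 1 ≤ n := le_trans (hpos i) h1
    rw [← QC_eq_Q k C hk hpos hmono hC0 hgood hbad n hn1]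
    exact QC_iff_even C hmono h1 h2
  funext i
  induction i with
  | zero => rw [hC0]; rfl
  | succ i ih =>
    by_contra hne
    have hCi : C i = Aseq k i := ih
    rcases Nat.lt_or_ge (C (i+1)) (Aseq k (i+1)) with h | h
    · -- n := C (i+1) lies in [Aseq i, Aseq (i+1)), so Q n ↔ Even i
      have hA1 : Aseq k i ≤ C (i+1) := by
        have := hmono (show i < i+1 by omega); omega
      have hQ1 : Q k (C (i+1)) ↔ Even i := Q_iff_even k hk i _ hA1 h
      have hQ2 : Q k (C (i+1)) ↔ Even (i+1) :=
        hQev (i+1) (C (i+1)) le_rfl (hmono (show i+1 < i+1+1 by omega))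
      rw [hQ2, Nat.even_add_one] at hQ1
      tauto
    · have hlt : Aseq k (i+1) < C (i+1) := by omega
      have hA1 : C i ≤ Aseq k (i+1) := by
        have := Aseq_lt_succ k hk i; omega
      have hQ1 : Q k (Aseq k (i+1)) ↔ Even i := hQev i _ hA1 hlt
      have hQ2 : Q k (Aseq k (i+1)) ↔ Even (i+1) := Q_Aseq k hk (i+1)
      rw [hQ2, Nat.even_add_one] at hQ1
      tauto

end Uniqueness

/-- Here `A i` denotes the term `A_{i+1}` of the paper, so that
`G = ⋃_{i ≥ 1} (1/A_{2i}, 1/A_{2i-1}]` and `Bad G = ⋃_{i ≥ 1} (1/A_{2i+1}, 1/A_{2i}]`. -/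
theorem stmt_11 (k : ℕ) (hk : 3 ≤ k) :
    ∃! A : ℕ → ℕ,
      (∀ i, 0 < A i) ∧ StrictMono A ∧ A 0 = 1 ∧
      kGood k (⋃ i : ℕ, Set.Ioc (1 / (A (2 * i + 1) : ℝ)) (1 / (A (2 * i) : ℝ))) ∧
      Bad k (⋃ i : ℕ, Set.Ioc (1 / (A (2 * i + 1) : ℝ)) (1 / (A (2 * i) : ℝ))) =
        ⋃ i : ℕ, Set.Ioc (1 / (A (2 * i + 2) : ℝ)) (1 / (A (2 * i + 1) : ℝ)) := by
  refine ⟨Aseq k, ⟨fun i => Aseq_one_le k hk i, Aseq_strictMono k hk, rfl,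
    kGood_Aseq k hk, Bad_Aseq k hk⟩, ?_⟩
  rintro C ⟨hpos, hmono, hC0, hgood, hbad⟩
  exact C_eq_Aseq k C hk hpos hmono hC0 hgood hbad
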